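/- Suppose 𝔭 ≠ 0, X₀ is a nonzero element of 𝔨 whose real span equals the center of 𝔨 (the set of Z ∈ 𝔨 with [Z, W] = 0 for all W ∈ 𝔨), and [X₀, [X₀, Y]] = -Y for all Y ∈ 𝔭. Let φ be a Lie algebra automorphism of 𝔤 with φ(𝔨) = 𝔨 and φ(𝔭) = 𝔭. Then φ(X₀) = X₀ or φ(X₀) = -X₀. -/
import Mathlib


/-- Let `𝔤` be a real Lie algebra with a Cartan decomposition
`𝔤 = 𝔨 ⊕ 𝔭` (so `[𝔨,𝔨] ⊆ 𝔨`, `[𝔨,𝔭] ⊆ 𝔭`, `[𝔭,𝔭] ⊆ 𝔨`). Suppose `𝔭 ≠ 0`, `X₀` is a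
nonzero element whose real span equals the center of `𝔨`, and `[X₀,[X₀,Y]] = -Y` for
all `Y ∈ 𝔭`. If `φ` is a Lie algebra automorphism of `𝔤` with `φ(𝔨) = 𝔨` and
`φ(𝔭) = 𝔭`, then `φ(X₀) = X₀` or `φ(X₀) = -X₀`. -/
theorem automorphism_fixes_center_up_to_sign {L : Type*} [LieRing L] [LieAlgebra ℝ L]
    (k p : Submodule ℝ L) (hcompl : IsCompl k p)
    (hkk : ∀ x ∈ k, ∀ y ∈ k, ⁅x, y⁆ ∈ k)
    (hkp : ∀ x ∈ k, ∀ y ∈ p, ⁅x, y⁆ ∈ p)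
    (hpp : ∀ x ∈ p, ∀ y ∈ p, ⁅x, y⁆ ∈ k)
    (hpne : p ≠ ⊥)
    (X₀ : L) (hX₀ : X₀ ≠ 0)
    (hcenter : ∀ Z : L, Z ∈ Submodule.span ℝ ({X₀} : Set L) ↔
      Z ∈ k ∧ ∀ W ∈ k, ⁅Z, W⁆ = 0)
    (hJ : ∀ Y ∈ p, ⁅X₀, ⁅X₀, Y⁆⁆ = -Y)
    (φ : L ≃ₗ⁅ℝ⁆ L)
    (hφk : Submodule.map φ.toLieHom.toLinearMap k = k)
    (hφp : Submodule.map φ.toLieHom.toLinearMap p = p) :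
    φ X₀ = X₀ ∨ φ X₀ = -X₀ := by
  -- X₀ is in k
  have hX₀span : X₀ ∈ Submodule.span ℝ ({X₀} : Set L) :=
    Submodule.mem_span_singleton_self X₀
  have hX₀k : X₀ ∈ k := ((hcenter X₀).1 hX₀span).1
  -- φ X₀ satisfies the center conditions
  have hφX₀k : φ X₀ ∈ k := by
    rw [← hφk]; exact ⟨X₀, hX₀k, rfl⟩
  have hφX₀c : ∀ W ∈ k, ⁅φ X₀, W⁆ = 0 := by
    intro W hW
    have hW' : φ.symm W ∈ k := by
      have hW2 : W ∈ Submodule.map φ.toLieHom.toLinearMap k := by rw [hφk]; exact hW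
      obtain ⟨w, hw, hww⟩ := hW2
      have : φ.symm W = w := by rw [← hww]; exact φ.symm_apply_apply w
      rw [this]; exact hw
    have h0 : ⁅X₀, φ.symm W⁆ = 0 := ((hcenter X₀).1 hX₀span).2 _ hW'
    calc ⁅φ X₀, W⁆ = ⁅φ X₀, φ (φ.symm W)⁆ := by rw [φ.apply_symm_apply]
      _ = φ ⁅X₀, φ.symm W⁆ := (φ.map_lie _ _).symm
      _ = 0 := by rw [h0]; exact φ.toLinearEquiv.map_zero
  -- hence φ X₀ = c • X₀
  obtain ⟨c, hc⟩ := Submodule.mem_span_singleton.1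
    ((hcenter (φ X₀)).2 ⟨hφX₀k, hφX₀c⟩)
  -- pick nonzero Y ∈ p
  obtain ⟨Y, hYp, hY0⟩ := (Submodule.ne_bot_iff p).1 hpne
  -- φ.symm Y ∈ p
  have hY' : φ.symm Y ∈ p := by
    have hY2 : Y ∈ Submodule.map φ.toLieHom.toLinearMap p := by rw [hφp]; exact hYp
    obtain ⟨w, hw, hww⟩ := hY2
    have : φ.symm Y = w := by rw [← hww]; exact φ.symm_apply_apply w
    rw [this]; exact hw
  have key : ⁅φ X₀, ⁅φ X₀, Y⁆⁆ = -Y := by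
    calc ⁅φ X₀, ⁅φ X₀, Y⁆⁆ = ⁅φ X₀, ⁅φ X₀, φ (φ.symm Y)⁆⁆ := by rw [φ.apply_symm_apply]
      _ = φ ⁅X₀, ⁅X₀, φ.symm Y⁆⁆ := by rw [← φ.map_lie, ← φ.map_lie]
      _ = φ (-(φ.symm Y)) := by rw [hJ _ hY']
      _ = -Y := by
          have : φ (-φ.symm Y) = -φ (φ.symm Y) := φ.toLinearEquiv.map_neg _
          rw [this, φ.apply_symm_apply]
  rw [← hc] at key
  have key2 : (c * c) • ⁅X₀, ⁅X₀, Y⁆⁆ = -Y := by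
    rw [← key]
    simp [smul_smul, mul_comm]
  rw [hJ Y hYp, smul_neg] at key2
  have hcc : (c * c - 1) • Y = 0 := by
    rw [sub_smul, one_smul, sub_eq_zero]
    exact neg_injective key2
  have hc1 : c * c = 1 := by
    by_contra h
    exact hY0 ((smul_eq_zero.1 hcc).resolve_left (sub_ne_zero.2 h))
  rcases mul_self_eq_one_iff.1 hc1 with h1 | h1
  · left; rw [← hc, h1, one_smul]
  · right; rw [← hc, h1, neg_one_smul]
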